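/- Let G be a connected complex Lie group modeled on a finite-dimensional complex normed space which is a Cousin group, let E be a complex Banach space, and let ρ : G → (E →L[ℂ] E) be a holomorphic map into the continuous ℂ-linear endomorphisms of E satisfying ρ(1) = id and ρ(g·h) = ρ(g) ∘ ρ(h) for all g, h ∈ G. Then ρ(g) = id for every g ∈ G, i.e. every representation of a Cousin group in a Banach space is trivial. -/

import Mathlib

open Manifold

/-- **Representations of Cousin groups are trivial.**
Let `G` be a connected complex Lie group (modeled on a finite-dimensional complex normed
space `E`) which is a Cousin group, i.e. every holomorphic function `G → ℂ` is constant.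
Then every holomorphic representation `ρ` of `G` on a complex Banach space `E'` (a holomorphic
map into the continuous `ℂ`-linear endomorphisms with `ρ 1 = id` and `ρ (g * h) = ρ g ∘ ρ h`)
is trivial: `ρ g = id` for all `g`. -/
theorem representation_of_cousin_group_trivial
    {E : Type*} [NormedAddCommGroup E] [NormedSpace ℂ E] [FiniteDimensional ℂ E]
    {G : Type*} [TopologicalSpace G] [ChartedSpace E G] [Group G] [IsTopologicalGroup G]
    [LieGroup 𝓘(ℂ, E) (⊤ : ℕ∞) G] [ConnectedSpace G]
    (hcousin : ∀ g : G → ℂ, MDifferentiable 𝓘(ℂ, E) 𝓘(ℂ, ℂ) g → ∀ x y : G, g x = g y)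
    {E' : Type*} [NormedAddCommGroup E'] [NormedSpace ℂ E'] [CompleteSpace E']
    (ρ : G → (E' →L[ℂ] E'))
    (hρ : MDifferentiable 𝓘(ℂ, E) 𝓘(ℂ, E' →L[ℂ] E') ρ)
    (hone : ρ 1 = ContinuousLinearMap.id ℂ E')
    (hmul : ∀ g h : G, ρ (g * h) = (ρ g).comp (ρ h)) :
    ∀ g : G, ρ g = ContinuousLinearMap.id ℂ E' := by
  intro g
  rw [← hone]
  rw [NormedSpace.eq_iff_forall_dual_eq ℂ]
  intro φ
  exact hcousin (fun x => φ (ρ x)) (φ.differentiable.mdifferentiable.comp hρ) g 1
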